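/- Fix M, N, d ∈ ℕ with M, N ≥ 1. Let x⁽¹⁾, …, x⁽ᴹ⁾, y⁽¹⁾, …, y⁽ᴺ⁾ be random vectors in ℝ^d whose d·(M+N) coordinates are drawn independently and identically from the uniform distribution on [−1, 1]. Then the probability that the pair ({x⁽¹⁾, …, x⁽ᴹ⁾}, {y⁽¹⁾, …, y⁽ᴺ⁾}) is convexly separable is at least 1 − (1 − M!·N!/(M+N)!)^d. -/

import Mathlib

open MeasureTheory

/-- An ordered pair `(X₁, X₂)` of subsets of ℝ^d is *convexly separable* if there exists a
nonempty closed convex set `X ⊆ ℝ^d` such that `X₂ ⊆ X` and `X₁ ⊆ ℝ^d \ X`. -/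
def ConvexlySeparable {d : ℕ} (X₁ X₂ : Set (EuclideanSpace ℝ (Fin d))) : Prop :=
  ∃ X : Set (EuclideanSpace ℝ (Fin d)),
    X.Nonempty ∧ IsClosed X ∧ Convex ℝ X ∧ X₂ ⊆ X ∧ X₁ ⊆ Xᶜ

/-- The uniform probability distribution on the interval `[-1, 1] ⊆ ℝ`. -/
noncomputable def uniformIcc : Measure ℝ :=
  (volume (Set.Icc (-1 : ℝ) 1))⁻¹ • volume.restrict (Set.Icc (-1 : ℝ) 1)

instance : IsProbabilityMeasure uniformIcc := by
  constructor
  rw [uniformIcc, Measure.smul_apply, Measure.restrict_apply_univ, Real.volume_Icc]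
  norm_num
  rw [ENNReal.inv_mul_cancel] <;> simp

instance : NullSingletonClass uniformIcc := by
  constructor
  intro x
  rw [uniformIcc, Measure.smul_apply, Measure.restrict_apply (measurableSet_singleton x)]
  have : volume ({x} ∩ Set.Icc (-1:ℝ) 1) = 0 :=
    measure_mono_null Set.inter_subset_left (measure_singleton x)
  simp [this]

/-- The event that the values of `v` are strictly increasing along the enumeration `e`. -/
def ordEvent {α : Type*} {n : ℕ} (e : Fin n ≃ α) : Set (α → ℝ) :=
  {v | StrictMono fun i => v (e i)}

lemma ordEvent_measurableSet {α : Type*} [MeasurableSpace (α → ℝ)]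
    (h : ∀ a : α, Measurable fun v : α → ℝ => v a) {n : ℕ} (e : Fin n ≃ α) :
    MeasurableSet (ordEvent e) := by
  have : ordEvent e = ⋂ (p : Fin n × Fin n) (_ : p.1 < p.2),
      {v : α → ℝ | v (e p.1) < v (e p.2)} := by
    ext v
    constructor
    · intro hv
      simp only [Set.mem_iInter]
      intro p hp
      exact hv hp
    · intro hv
      intro a b hab
      have := Set.mem_iInter.mp hv (a, b)
      exact Set.mem_iInter.mp this hab
  rw [this]
  exact MeasurableSet.iInter fun p => MeasurableSet.iInter fun _ =>
    measurableSet_lt (h _) (h _)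

lemma ordEvent_disjoint {α : Type*} {n : ℕ} {e₁ e₂ : Fin n ≃ α} (h : e₁ ≠ e₂) :
    Disjoint (ordEvent e₁) (ordEvent e₂) := by
  rw [Set.disjoint_left]
  intro v h₁ h₂
  apply h
  have hinj : Function.Injective v := by
    have : Function.Injective fun i => v (e₁ i) := (h₁ : StrictMono _).injective
    intro a b hab
    have := @this (e₁.symm a) (e₁.symm b) (by simpa using hab)
    simpa using this
  have hr : Set.range (fun i => v (e₁ i)) = Set.range (fun i => v (e₂ i)) := by
    have h1 : Set.range (fun i => v (e₁ i)) = Set.range v := by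
      rw [show (fun i => v (e₁ i)) = v ∘ e₁ from rfl, Set.range_comp, Equiv.range_eq_univ,
        Set.image_univ]
    have h2 : Set.range (fun i => v (e₂ i)) = Set.range v := by
      rw [show (fun i => v (e₂ i)) = v ∘ e₂ from rfl, Set.range_comp, Equiv.range_eq_univ,
        Set.image_univ]
    rw [h1, h2]
  haveI : WellFoundedLT (Fin n) := Finite.to_wellFoundedLT
  have := StrictMono.range_inj (h₁ : StrictMono _) (h₂ : StrictMono _) |>.mp hr
  ext i
  exact hinj (congrFun this i)

lemma exists_ordEvent {α : Type*} [Fintype α] [DecidableEq α] {v : α → ℝ}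
    (hv : Function.Injective v) :
    ∃ e : Fin (Fintype.card α) ≃ α, v ∈ ordEvent e := by
  classical
  let e₀ : Fin (Fintype.card α) ≃ α := (Fintype.equivFin α).symm
  let f : Fin (Fintype.card α) → ℝ := fun i => v (e₀ i)
  refine ⟨(Tuple.sort f).trans e₀, ?_⟩
  have hmono : Monotone (f ∘ Tuple.sort f) := Tuple.monotone_sort f
  have hinj : Function.Injective (f ∘ Tuple.sort f) := by
    apply Function.Injective.comp
    · exact hv.comp e₀.injective
    · exact (Tuple.sort f).injective
  exact hmono.strictMono_of_injective hinj

section MeasureSection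
variable {α : Type*} [Fintype α]

/-- all ordering events have the same measure -/
lemma ordEvent_measure_eq {n : ℕ} (e₁ e₂ : Fin n ≃ α) :
    Measure.pi (fun _ : α => uniformIcc) (ordEvent e₁)
      = Measure.pi (fun _ : α => uniformIcc) (ordEvent e₂) := by
  classical
  set τ : α ≃ α := e₁.symm.trans e₂ with hτ
  have mp := measurePreserving_piCongrLeft (fun _ : α => uniformIcc) τ
  have hmeas : MeasurableSet (ordEvent e₂) :=
    ordEvent_measurableSet (fun a => measurable_pi_apply a) e₂
  have key := mp.measure_preimage hmeas.nullMeasurableSet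
  have hset : (MeasurableEquiv.piCongrLeft (fun _ : α => ℝ) τ) ⁻¹' ordEvent e₂
      = ordEvent e₁ := by
    ext v
    simp only [Set.mem_preimage, ordEvent, Set.mem_setOf_eq]
    have hv : ∀ i : Fin n,
        (MeasurableEquiv.piCongrLeft (fun _ : α => ℝ) τ) v (e₂ i) = v (e₁ i) := by
      intro i
      have : e₂ i = τ (e₁ i) := by simp [hτ]
      rw [this]
      exact Equiv.piCongrLeft_apply_apply (fun _ : α => ℝ) τ v (e₁ i)
    have hfun : (fun i => (MeasurableEquiv.piCongrLeft (fun _ : α => ℝ) τ) v (e₂ i))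
        = fun i => v (e₁ i) := funext hv
    rw [hfun]
  rw [hset] at key
  exact key

/-- ties have measure zero -/
lemma ties_null [DecidableEq α] :
    Measure.pi (fun _ : α => uniformIcc) {v : α → ℝ | ¬ Function.Injective v} = 0 := by
  classical
  have hsub : {v : α → ℝ | ¬ Function.Injective v}
      ⊆ ⋃ (p : α × α) (_ : p.1 ≠ p.2), {v : α → ℝ | v p.1 = v p.2} := by
    intro v hv
    simp only [Set.mem_setOf_eq, Function.Injective] at hv
    push_neg at hv
    obtain ⟨a, b, hab, hne⟩ := hv
    exact Set.mem_iUnion₂.mpr ⟨(a, b), hne, hab⟩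
  refine measure_mono_null hsub (measure_iUnion_null fun p => ?_)
  by_cases hp : p.1 ≠ p.2
  · refine measure_mono_null (Set.iUnion_subset fun _ => subset_rfl) ?_
    -- measure of {v | v a = v b} = 0 for a ≠ b
    set a := p.1; set b := p.2
    have mp := measurePreserving_piEquivPiSubtypeProd
      (fun _ : α => uniformIcc) (fun i => i = a)
    set Φ := MeasurableEquiv.piEquivPiSubtypeProd (fun _ : α => ℝ) (fun i => i = a) with hΦ
    have hb : ¬ (b = a) := fun h => hp h.symm
    set D' : Set (({i : α // i = a} → ℝ) × ({i : α // ¬ i = a} → ℝ)) :=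
      {q | q.1 ⟨a, rfl⟩ = q.2 ⟨b, hb⟩} with hD'
    have hD'meas : MeasurableSet D' :=
      measurableSet_eq_fun (measurable_fst.eval) (measurable_snd.eval)
    have key := mp.measure_preimage hD'meas.nullMeasurableSet
    have hset : Φ ⁻¹' D' = {v : α → ℝ | v a = v b} := by
      ext v
      simp [hΦ, hD', MeasurableEquiv.piEquivPiSubtypeProd, Equiv.piEquivPiSubtypeProd]
    rw [hset] at key
    rw [key, Measure.prod_apply hD'meas]
    have : ∀ u : {i : α // i = a} → ℝ,
        (Measure.pi fun _ : {i : α // ¬ i = a} => uniformIcc) (Prod.mk u ⁻¹' D') = 0 := by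
      intro u
      have : Prod.mk u ⁻¹' D' = {w : {i : α // ¬ i = a} → ℝ | w ⟨b, hb⟩ = u ⟨a, rfl⟩} := by
        ext w; simp [hD', eq_comm]
      rw [this]
      exact Measure.pi_hyperplane _ _ _
    simp only [this]
    simp
  · rw [not_ne_iff] at hp
    simp [hp]

/-- lower bound on the measure of each ordering event -/
lemma ordEvent_measure_ge [DecidableEq α] (e : Fin (Fintype.card α) ≃ α) :
    ((Fintype.card α).factorial : ENNReal)⁻¹
      ≤ Measure.pi (fun _ : α => uniformIcc) (ordEvent e) := by
  classical
  set μα := Measure.pi (fun _ : α => uniformIcc) with hμα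
  set c := μα (ordEvent e) with hc
  have hcover : (Set.univ : Set (α → ℝ)) ⊆ {v : α → ℝ | ¬ Function.Injective v}
      ∪ ⋃ e' : Fin (Fintype.card α) ≃ α, ordEvent e' := by
    intro v _
    by_cases hv : Function.Injective v
    · right
      obtain ⟨e', he'⟩ := exists_ordEvent hv
      exact Set.mem_iUnion.mpr ⟨e', he'⟩
    · left; exact hv
  have h1 : (1 : ENNReal) ≤ ((Fintype.card α).factorial : ENNReal) * c := by
    have := measure_mono (μ := μα) hcover
    rw [measure_univ] at this
    refine this.trans ?_
    refine (measure_union_le _ _).trans ?_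
    rw [ties_null]
    rw [zero_add]
    refine (measure_iUnion_fintype_le _ _).trans ?_
    have heq : ∀ e' : Fin (Fintype.card α) ≃ α, μα (ordEvent e') = c :=
      fun e' => ordEvent_measure_eq e' e
    calc ∑ e' : Fin (Fintype.card α) ≃ α, μα (ordEvent e')
        = ∑ _e' : Fin (Fintype.card α) ≃ α, c := by
          exact Finset.sum_congr rfl (fun e' _ => heq e')
      _ = (Fintype.card (Fin (Fintype.card α) ≃ α)) * c := by
          rw [Finset.sum_const, nsmul_eq_mul]; rfl
      _ = ((Fintype.card α).factorial : ENNReal) * c := by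
          rw [Fintype.card_equiv e, Fintype.card_fin]
      _ ≤ ((Fintype.card α).factorial : ENNReal) * c := le_rfl
  have hfac0 : ((Fintype.card α).factorial : ENNReal) ≠ 0 := by
    simp [Nat.factorial_ne_zero]
  have hfactop : ((Fintype.card α).factorial : ENNReal) ≠ ⊤ := by simp
  calc ((Fintype.card α).factorial : ENNReal)⁻¹
      = ((Fintype.card α).factorial : ENNReal)⁻¹ * 1 := by rw [mul_one]
    _ ≤ ((Fintype.card α).factorial : ENNReal)⁻¹
        * (((Fintype.card α).factorial : ENNReal) * c) := by
        exact mul_le_mul_right h1 _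
    _ = c := by rw [← mul_assoc, ENNReal.inv_mul_cancel hfac0 hfactop, one_mul]

end MeasureSection

lemma ordEvent_measure_ge' {α : Type*} [Fintype α] [DecidableEq α] {n : ℕ}
    (hn : Fintype.card α = n) (e : Fin n ≃ α) :
    ((n.factorial : ENNReal))⁻¹ ≤ Measure.pi (fun _ : α => uniformIcc) (ordEvent e) := by
  subst hn
  exact ordEvent_measure_ge e

section Count
variable (M N : ℕ)

/-- the "good" event in one coordinate: all `y`-values are below all `x`-values -/
def goodSet : Set ((Fin M ⊕ Fin N) → ℝ) :=
  {v | ∀ (j : Fin N) (i : Fin M), v (Sum.inr j) < v (Sum.inl i)}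

lemma goodSet_measurableSet : MeasurableSet (goodSet M N) := by
  have : goodSet M N = ⋂ (j : Fin N) (i : Fin M),
      {v : (Fin M ⊕ Fin N) → ℝ | v (Sum.inr j) < v (Sum.inl i)} := by
    ext v; simp [goodSet]
  rw [this]
  exact MeasurableSet.iInter fun j => MeasurableSet.iInter fun i =>
    measurableSet_lt (measurable_pi_apply _) (measurable_pi_apply _)

/-- the enumeration of `Fin M ⊕ Fin N` putting (permuted) `inr`'s first, then `inl`'s -/
def enumOf (p : Equiv.Perm (Fin N) × Equiv.Perm (Fin M)) :
    Fin (N + M) ≃ (Fin M ⊕ Fin N) :=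
  finSumFinEquiv.symm.trans ((Equiv.sumCongr p.1 p.2).trans (Equiv.sumComm (Fin N) (Fin M)))

lemma enumOf_injective : Function.Injective (enumOf M N) := by
  intro p q h
  have h2 : ∀ x, (Equiv.sumCongr p.1 p.2) x = (Equiv.sumCongr q.1 q.2) x := by
    intro x
    have := congrArg (fun e => (Equiv.sumComm (Fin N) (Fin M)).symm (e (finSumFinEquiv x))) h
    simpa [enumOf] using this
  have hp1 : p.1 = q.1 := by
    ext j
    exact congrArg Fin.val (show p.1 j = q.1 j by simpa using h2 (Sum.inl j))
  have hp2 : p.2 = q.2 := by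
    ext i
    exact congrArg Fin.val (show p.2 i = q.2 i by simpa using h2 (Sum.inr i))
  exact Prod.ext hp1 hp2

lemma enumOf_ordEvent_subset (p : Equiv.Perm (Fin N) × Equiv.Perm (Fin M)) :
    ordEvent (enumOf M N p) ⊆ goodSet M N := by
  intro v hv
  intro j i
  have hlt : (Fin.castAdd M (p.1.symm j) : Fin (N + M)) < Fin.natAdd N (p.2.symm i) := by
    rw [Fin.lt_def]
    simp only [Fin.coe_castAdd, Fin.coe_natAdd]
    have := (p.1.symm j).isLt
    omega
  have := (hv : StrictMono _) hlt
  have e1 : enumOf M N p (Fin.castAdd M (p.1.symm j)) = Sum.inr j := by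
    simp [enumOf, finSumFinEquiv_symm_apply_castAdd]
  have e2 : enumOf M N p (Fin.natAdd N (p.2.symm i)) = Sum.inl i := by
    simp [enumOf, finSumFinEquiv_symm_apply_natAdd]
  simpa [e1, e2] using this

lemma goodSet_measure_ge :
    ENNReal.ofReal ((M.factorial * N.factorial : ℝ) / ((M + N).factorial : ℝ))
      ≤ Measure.pi (fun _ : Fin M ⊕ Fin N => uniformIcc) (goodSet M N) := by
  classical
  set μα := Measure.pi (fun _ : Fin M ⊕ Fin N => uniformIcc) with hμα
  have hcard : Fintype.card (Fin M ⊕ Fin N) = N + M := by simp [add_comm]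
  -- each ordEvent has measure ≥ 1/(N+M)!
  have hge : ∀ p : Equiv.Perm (Fin N) × Equiv.Perm (Fin M),
      ((N + M).factorial : ENNReal)⁻¹ ≤ μα (ordEvent (enumOf M N p)) :=
    fun p => ordEvent_measure_ge' hcard (enumOf M N p)
  -- the union of ordEvents over pairs of permutations is inside goodSet
  have hunion : μα (⋃ p : Equiv.Perm (Fin N) × Equiv.Perm (Fin M),
      ordEvent (enumOf M N p)) ≤ μα (goodSet M N) :=
    measure_mono (Set.iUnion_subset fun p => enumOf_ordEvent_subset M N p)
  have hdisj : Pairwise (Function.onFun Disjoint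
      fun p : Equiv.Perm (Fin N) × Equiv.Perm (Fin M) => ordEvent (enumOf M N p)) := by
    intro p q hpq
    exact ordEvent_disjoint (fun h => hpq (enumOf_injective M N h))
  have hmeas : ∀ p : Equiv.Perm (Fin N) × Equiv.Perm (Fin M),
      MeasurableSet (ordEvent (enumOf M N p)) :=
    fun p => ordEvent_measurableSet (fun a => measurable_pi_apply a) _
  have hsum : μα (⋃ p : Equiv.Perm (Fin N) × Equiv.Perm (Fin M),
      ordEvent (enumOf M N p))
      = ∑ p : Equiv.Perm (Fin N) × Equiv.Perm (Fin M), μα (ordEvent (enumOf M N p)) := by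
    rw [measure_iUnion hdisj hmeas, tsum_fintype]
  have hcount : ((M.factorial * N.factorial : ℕ) : ENNReal) * ((N + M).factorial : ENNReal)⁻¹
      ≤ μα (goodSet M N) := by
    refine le_trans ?_ hunion
    rw [hsum]
    calc ((M.factorial * N.factorial : ℕ) : ENNReal) * ((N + M).factorial : ENNReal)⁻¹
        = ∑ _p : Equiv.Perm (Fin N) × Equiv.Perm (Fin M), ((N + M).factorial : ENNReal)⁻¹ := by
          rw [Finset.sum_const, nsmul_eq_mul]
          congr 1
          rw [Finset.card_univ, Fintype.card_prod, Fintype.card_perm, Fintype.card_perm,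
            Fintype.card_fin, Fintype.card_fin]
          push_cast
          ring
      _ ≤ ∑ p : Equiv.Perm (Fin N) × Equiv.Perm (Fin M), μα (ordEvent (enumOf M N p)) :=
          Finset.sum_le_sum fun p _ => hge p
  rw [Nat.add_comm N M] at hcount
  refine le_trans (le_of_eq ?_) hcount
  rw [ENNReal.ofReal_div_of_pos (by positivity), div_eq_mul_inv]
  congr 1
  · rw [show ((M.factorial : ℝ) * (N.factorial : ℝ)) = ((M.factorial * N.factorial : ℕ) : ℝ) by
      push_cast; ring]
    exact ENNReal.ofReal_natCast _
  · congr 1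
    exact ENNReal.ofReal_natCast _
end Count

/-- splitting off the last coordinate of `A × Fin (d+1)` -/
def splitEquiv (A : Type*) (d : ℕ) : (A ⊕ (A × Fin d)) ≃ (A × Fin (d + 1)) where
  toFun := Sum.elim (fun a => (a, Fin.last d)) (fun q => (q.1, q.2.castSucc))
  invFun := fun q =>
    if h : q.2 = Fin.last d then Sum.inl q.1 else Sum.inr (q.1, q.2.castPred h)
  left_inv := by
    rintro (a | ⟨a, k⟩)
    · simp
    · simp [(Fin.castSucc_lt_last k).ne]
  right_inv := by
    rintro ⟨a, k⟩
    by_cases h : k = Fin.last d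
    · simp [h]
    · simp [h]

/-- the set of `ω` all of whose "coordinate slices" lie in `S` -/
def sliceSet {A : Type*} (d : ℕ) (S : Set (A → ℝ)) : Set ((A × Fin d) → ℝ) :=
  {ω | ∀ k : Fin d, (fun a => ω (a, k)) ∈ S}

lemma sliceSet_measurableSet {A : Type*} {d : ℕ} {S : Set (A → ℝ)}
    (hS : MeasurableSet S) : MeasurableSet (sliceSet d S) := by
  have : sliceSet d S = ⋂ k : Fin d, (fun ω (a : A) => ω (a, k)) ⁻¹' S := by
    ext ω; simp [sliceSet]
  rw [this]
  exact MeasurableSet.iInter fun k =>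
    (measurable_pi_lambda _ fun a => measurable_pi_apply (a, k)) hS

lemma sliceSet_measure {A : Type*} [Fintype A] (μ : Measure ℝ) [IsProbabilityMeasure μ]
    {S : Set (A → ℝ)} (hS : MeasurableSet S) :
    ∀ d : ℕ, Measure.pi (fun _ : A × Fin d => μ) (sliceSet d S)
      = (Measure.pi (fun _ : A => μ) S) ^ d := by
  intro d
  induction d with
  | zero =>
    have : sliceSet 0 S = Set.univ := by
      ext ω; simp [sliceSet]
    rw [this, pow_zero, measure_univ]
  | succ d ih =>
    set e := splitEquiv A d with he
    have mp := (measurePreserving_sumPiEquivProdPi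
        (fun _ : A ⊕ (A × Fin d) => μ)).comp
      ((measurePreserving_piCongrLeft (fun _ : A × Fin (d + 1) => μ) e).symm
        (MeasurableEquiv.piCongrLeft (fun _ : A × Fin (d + 1) => ℝ) e))
    have htarget : MeasurableSet (S ×ˢ sliceSet d S) :=
      hS.prod (sliceSet_measurableSet hS)
    have key := mp.measure_preimage htarget.nullMeasurableSet
    have hset : (⇑(MeasurableEquiv.sumPiEquivProdPi (fun _ : A ⊕ (A × Fin d) => ℝ))
          ∘ ⇑(MeasurableEquiv.piCongrLeft (fun _ : A × Fin (d + 1) => ℝ) e).symm)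
        ⁻¹' (S ×ˢ sliceSet d S) = sliceSet (d + 1) S := by
      ext ω
      set w := (MeasurableEquiv.piCongrLeft (fun _ : A × Fin (d + 1) => ℝ) e).symm ω with hw
      have happ : ∀ s : A ⊕ (A × Fin d), w s = ω (e s) := by
        intro s
        rw [hw]
        exact Equiv.piCongrLeft_symm_apply _ _ _ _
      have hmem : (⇑(MeasurableEquiv.sumPiEquivProdPi (fun _ : A ⊕ (A × Fin d) => ℝ))
            ∘ ⇑(MeasurableEquiv.piCongrLeft (fun _ : A × Fin (d + 1) => ℝ) e).symm) ω
            ∈ (S ×ˢ sliceSet d S)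
          ↔ ((fun a => w (Sum.inl a)) ∈ S ∧ (fun q : A × Fin d => w (Sum.inr q)) ∈ sliceSet d S) := by
        rfl
      rw [Set.mem_preimage, hmem]
      have hl : (fun a => w (Sum.inl a)) = fun a => ω (a, Fin.last d) :=
        funext fun a => happ (Sum.inl a)
      have hr : ∀ k : Fin d, (fun a => w (Sum.inr (a, k))) = fun a => ω (a, k.castSucc) :=
        fun k => funext fun a => happ (Sum.inr (a, k))
      constructor
      · rintro ⟨h1, h2⟩
        intro k
        induction k using Fin.lastCases with
        | last =>
          rw [← hl]; exact h1
        | cast k =>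
          have := h2 k
          rwa [show (fun a => (fun q : A × Fin d => w (Sum.inr q)) (a, k))
            = fun a => ω (a, k.castSucc) from hr k] at this
      · intro h
        refine ⟨?_, ?_⟩
        · rw [hl]; exact h (Fin.last d)
        · intro k
          rw [show (fun a => (fun q : A × Fin d => w (Sum.inr q)) (a, k))
            = fun a => ω (a, k.castSucc) from hr k]
          exact h k.castSucc
    rw [hset] at key
    rw [key, Measure.prod_prod, ih, pow_succ]
    ring

/-- if in some coordinate all the `y`-values lie strictly below the `x`-values, the data is
convexly separable by a half-space -/
lemma convexlySeparable_of_good {M N d : ℕ} (hN : 1 ≤ N)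
    (ω : (Fin M ⊕ Fin N) × Fin d → ℝ) (k : Fin d)
    (hk : (fun a => ω (a, k)) ∈ goodSet M N) :
    ConvexlySeparable
      (Set.range fun i : Fin M =>
        (WithLp.toLp 2 (fun k : Fin d => ω (Sum.inl i, k)) : EuclideanSpace ℝ (Fin d)))
      (Set.range fun j : Fin N =>
        (WithLp.toLp 2 (fun k : Fin d => ω (Sum.inr j, k)) : EuclideanSpace ℝ (Fin d))) := by
  haveI : Nonempty (Fin N) := Fin.pos_iff_nonempty.mp hN
  have hne : (Finset.univ : Finset (Fin N)).Nonempty := Finset.univ_nonempty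
  set c : ℝ := Finset.univ.sup' hne (fun j : Fin N => ω (Sum.inr j, k)) with hc
  refine ⟨{z : EuclideanSpace ℝ (Fin d) | z k ≤ c}, ?_, ?_, ?_, ?_, ?_⟩
  · exact ⟨(WithLp.toLp 2 (fun _ => c) : EuclideanSpace ℝ (Fin d)), le_refl c⟩
  · have : IsClosed {z : EuclideanSpace ℝ (Fin d) | z k ≤ c} :=
      isClosed_le (EuclideanSpace.proj k).continuous continuous_const
    exact this
  · intro z hz w hw a b ha hb hab
    have hz' : z k ≤ c := hz
    have hw' : w k ≤ c := hw
    have : (a • z + b • w) k = a * z k + b * w k := by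
      simp [PiLp.add_apply, PiLp.smul_apply, smul_eq_mul]
    show (a • z + b • w) k ≤ c
    rw [this]
    calc a * z k + b * w k ≤ a * c + b * c := by
          apply add_le_add
          · exact mul_le_mul_of_nonneg_left hz' ha
          · exact mul_le_mul_of_nonneg_left hw' hb
      _ = c := by rw [← add_mul, hab, one_mul]
  · rintro z ⟨j, rfl⟩
    exact Finset.le_sup' (fun j : Fin N => ω (Sum.inr j, k)) (Finset.mem_univ j)
  · rintro z ⟨i, rfl⟩
    simp only [Set.mem_compl_iff, Set.mem_setOf_eq, not_le]
    rw [hc, Finset.sup'_lt_iff]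
    intro j _
    exact hk j i


theorem uniform_data_convexly_separable_prob_bound (M N d : ℕ) (hM : 1 ≤ M) (hN : 1 ≤ N) :
    ENNReal.ofReal
        (1 - (1 - (M.factorial * N.factorial : ℝ) / ((M + N).factorial : ℝ)) ^ d) ≤
      Measure.pi (fun _ : (Fin M ⊕ Fin N) × Fin d => uniformIcc)
        {ω | ConvexlySeparable
          (Set.range fun i : Fin M =>
            (WithLp.toLp 2 (fun k : Fin d => ω (Sum.inl i, k)) : EuclideanSpace ℝ (Fin d)))
          (Set.range fun j : Fin N =>
            (WithLp.toLp 2 (fun k : Fin d => ω (Sum.inr j, k)) : EuclideanSpace ℝ (Fin d)))} := by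
  classical
  set p : ℝ := (M.factorial * N.factorial : ℝ) / ((M + N).factorial : ℝ) with hp
  have hp0 : 0 ≤ p := by positivity
  have hp1 : p ≤ 1 := by
    rw [hp, div_le_one (by positivity)]
    have : M.factorial * N.factorial ≤ (M + N).factorial :=
      Nat.le_of_dvd (M + N).factorial_pos (Nat.factorial_mul_factorial_dvd_factorial_add M N)
    exact_mod_cast this
  set μbig := Measure.pi (fun _ : (Fin M ⊕ Fin N) × Fin d => uniformIcc) with hμbig
  set B : Set (((Fin M ⊕ Fin N) × Fin d) → ℝ) := sliceSet d (goodSet M N)ᶜ with hB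
  have hBmeas : MeasurableSet B := sliceSet_measurableSet (goodSet_measurableSet M N).compl
  -- Bᶜ is contained in the separability event
  have hsub : Bᶜ ⊆ {ω | ConvexlySeparable
      (Set.range fun i : Fin M =>
        (WithLp.toLp 2 (fun k : Fin d => ω (Sum.inl i, k)) : EuclideanSpace ℝ (Fin d)))
      (Set.range fun j : Fin N =>
        (WithLp.toLp 2 (fun k : Fin d => ω (Sum.inr j, k)) : EuclideanSpace ℝ (Fin d)))} := by
    intro ω hω
    simp only [hB, sliceSet, Set.mem_compl_iff, Set.mem_setOf_eq] at hω
    push_neg at hω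
    obtain ⟨k, hk⟩ := hω
    exact convexlySeparable_of_good hN ω k hk
  refine le_trans ?_ (measure_mono hsub)
  -- compute the measure of Bᶜ
  have hBval : μbig B = ((Measure.pi (fun _ : Fin M ⊕ Fin N => uniformIcc)) (goodSet M N)ᶜ) ^ d :=
    sliceSet_measure uniformIcc (goodSet_measurableSet M N).compl d
  have hgood := goodSet_measure_ge M N
  have hcompl : (Measure.pi (fun _ : Fin M ⊕ Fin N => uniformIcc)) (goodSet M N)ᶜ
      ≤ ENNReal.ofReal (1 - p) := by
    have h1 : (Measure.pi (fun _ : Fin M ⊕ Fin N => uniformIcc)) (goodSet M N)ᶜ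
        = 1 - (Measure.pi (fun _ : Fin M ⊕ Fin N => uniformIcc)) (goodSet M N) :=
      prob_compl_eq_one_sub (goodSet_measurableSet M N)
    rw [h1, show ENNReal.ofReal (1 - p) = 1 - ENNReal.ofReal p by
      rw [ENNReal.ofReal_sub _ hp0, ENNReal.ofReal_one]]
    exact tsub_le_tsub_left hgood 1
  have hBle : μbig B ≤ ENNReal.ofReal ((1 - p) ^ d) := by
    rw [hBval, ENNReal.ofReal_pow (by linarith)]
    exact pow_le_pow_left' hcompl d
  calc ENNReal.ofReal (1 - (1 - p) ^ d)
      = 1 - ENNReal.ofReal ((1 - p) ^ d) := by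
        rw [ENNReal.ofReal_sub _ (pow_nonneg (by linarith) d), ENNReal.ofReal_one]
    _ ≤ 1 - μbig B := tsub_le_tsub_left hBle 1
    _ = μbig Bᶜ := (prob_compl_eq_one_sub hBmeas).symm
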